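/- Let z(t,θ) = (x(t)cos θ, x(t)sin θ, cθ + z(t)) be the helicoidal surface of a frontal γ = (x, z) with ν = (cos φ, sin φ), with c ≠ 0 and ξ(t) = √(c² sin²φ(t) + x(t)²) ≠ 0 for all t. Then the vector field n(t,θ) = (1/ξ(t))(c sin φ(t) sin θ + x(t)cos φ(t)cos θ, -c sin φ(t)cos θ + x(t)cos φ(t)sin θ, x(t)sin φ(t)) is a unit vector field satisfying n·z_t = 0 and n·z_θ = 0; hence z is a frontal. -/

import Mathlib

/-- For the helicoidal surface `z(t,θ) = (x(t)cos θ, x(t)sin θ, cθ + z(t))` with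
`c ≠ 0` and `ξ(t) ≠ 0`, the field
`n = (1/ξ)(c sin φ sin θ + x cos φ cos θ, -c sin φ cos θ + x cos φ sin θ, x sin φ)`
is a unit vector field orthogonal to `z_t` and `z_θ`; hence `z` is a frontal. -/
theorem stmt_7
    (x z φ β ℓ ξ : ℝ → ℝ) (c : ℝ) (hc : c ≠ 0)
    (hx : Differentiable ℝ x) (hz : Differentiable ℝ z) (hφ : Differentiable ℝ φ)
    (hx' : ∀ t, deriv x t = -β t * Real.sin (φ t))
    (hz' : ∀ t, deriv z t = β t * Real.cos (φ t))
    (hφ' : ∀ t, deriv φ t = ℓ t)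
    (hξ : ∀ t, ξ t = Real.sqrt (c ^ 2 * Real.sin (φ t) ^ 2 + x t ^ 2))
    (hξ0 : ∀ t, ξ t ≠ 0) :
    ∀ t θ : ℝ,
      (((c * Real.sin (φ t) * Real.sin θ + x t * Real.cos (φ t) * Real.cos θ) / ξ t) ^ 2 +
        ((-(c * Real.sin (φ t)) * Real.cos θ + x t * Real.cos (φ t) * Real.sin θ) / ξ t) ^ 2 +
        (x t * Real.sin (φ t) / ξ t) ^ 2 = 1) ∧
      (((c * Real.sin (φ t) * Real.sin θ + x t * Real.cos (φ t) * Real.cos θ) / ξ t) *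
          deriv (fun s => x s * Real.cos θ) t +
        ((-(c * Real.sin (φ t)) * Real.cos θ + x t * Real.cos (φ t) * Real.sin θ) / ξ t) *
          deriv (fun s => x s * Real.sin θ) t +
        (x t * Real.sin (φ t) / ξ t) * deriv (fun s => c * θ + z s) t = 0) ∧
      (((c * Real.sin (φ t) * Real.sin θ + x t * Real.cos (φ t) * Real.cos θ) / ξ t) *
          deriv (fun ϑ => x t * Real.cos ϑ) θ +
        ((-(c * Real.sin (φ t)) * Real.cos θ + x t * Real.cos (φ t) * Real.sin θ) / ξ t) *
          deriv (fun ϑ => x t * Real.sin ϑ) θ +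
        (x t * Real.sin (φ t) / ξ t) * deriv (fun ϑ => c * ϑ + z t) θ = 0) := by
  intro t θ
  have hξsq : ξ t ^ 2 = c ^ 2 * Real.sin (φ t) ^ 2 + x t ^ 2 := by
    rw [hξ t, Real.sq_sqrt (by positivity)]
  have hst : Real.sin (φ t) ^ 2 + Real.cos (φ t) ^ 2 = 1 := Real.sin_sq_add_cos_sq _
  have hsθ : Real.sin θ ^ 2 + Real.cos θ ^ 2 = 1 := Real.sin_sq_add_cos_sq _
  have hξne := hξ0 t
  refine ⟨?_, ?_, ?_⟩
  · field_simp
    linear_combination (c ^ 2 * Real.sin (φ t) ^ 2 + x t ^ 2 * Real.cos (φ t) ^ 2) * hsθ +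
      x t ^ 2 * hst - hξsq
  · have d1 : deriv (fun s => x s * Real.cos θ) t = deriv x t * Real.cos θ :=
      deriv_mul_const (hx t) _
    have d2 : deriv (fun s => x s * Real.sin θ) t = deriv x t * Real.sin θ :=
      deriv_mul_const (hx t) _
    have d3 : deriv (fun s => c * θ + z s) t = deriv z t := by
      rw [deriv_const_add]
    rw [d1, d2, d3, hx' t, hz' t]
    field_simp
    linear_combination (-(Real.sin (φ t) * x t * Real.cos (φ t) * β t)) * hsθ
  · have d1 : deriv (fun ϑ => x t * Real.cos ϑ) θ = x t * (-Real.sin θ) :=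
      ((Real.hasDerivAt_cos θ).const_mul (x t)).deriv
    have d2 : deriv (fun ϑ => x t * Real.sin ϑ) θ = x t * Real.cos θ :=
      ((Real.hasDerivAt_sin θ).const_mul (x t)).deriv
    have d3 : deriv (fun ϑ => c * ϑ + z t) θ = c := by
      rw [deriv_add_const]
      simpa using ((hasDerivAt_id θ).const_mul c).deriv
    rw [d1, d2, d3]
    field_simp
    linear_combination (-(c * Real.sin (φ t) * x t)) * hsθ
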